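/- Let x̄ ∈ ℝ^r have some zero entry and exactly m distinct entries with m ≥ 2. Then x̄ lies in the span of the entrywise powers x̄², x̄³, …, x̄^m. -/

import Mathlib

/-- If `x̄ ∈ ℝ^r` has a zero entry and exactly `m ≥ 2` distinct entries, then `x̄`
lies in the span of the entrywise powers `x̄², x̄³, …, x̄^m`. -/
theorem vec_mem_span_of_powers (r m : ℕ) (hm : 2 ≤ m)
    (xb : Fin r → ℝ) (hzero : ∃ i, xb i = 0)
    (hcard : (Finset.univ.image xb).card = m) :
    xb ∈ Submodule.span ℝ
      (Set.range fun k : Fin (m - 1) => fun i => xb i ^ ((k : ℕ) + 2)) := by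
  obtain ⟨i0, hi0⟩ := hzero
  set T : Finset ℝ := (Finset.univ.image xb).erase 0 with hT
  have h0mem : (0:ℝ) ∈ Finset.univ.image xb :=
    Finset.mem_image.2 ⟨i0, Finset.mem_univ _, hi0⟩
  have hTcard : T.card = m - 1 := by
    rw [hT, Finset.card_erase_of_mem h0mem, hcard]
  have hinj : Set.InjOn (id : ℝ → ℝ) T := Function.injective_id.injOn
  set p := Lagrange.interpolate T id (fun a => a⁻¹) with hp
  have hdeg : p.degree < ((m-1 : ℕ) : WithBot ℕ) := by
    rw [← hTcard]; exact Lagrange.degree_interpolate_lt _ hinj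
  have hnat : p.natDegree < m - 1 := by
    rcases eq_or_ne p 0 with h | h
    · simp [h]; omega
    · exact_mod_cast (Polynomial.degree_eq_natDegree h) ▸ hdeg
  have key : ∀ i, xb i = ∑ k ∈ Finset.range (m-1), p.coeff k * xb i ^ (k+2) := by
    intro i
    have hev : p.eval (xb i) = ∑ k ∈ Finset.range (m-1), p.coeff k * xb i ^ k :=
      Polynomial.eval_eq_sum_range' hnat _
    have hx2 : xb i ^ 2 * p.eval (xb i)
        = ∑ k ∈ Finset.range (m-1), p.coeff k * xb i ^ (k+2) := by
      rw [hev, Finset.mul_sum]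
      exact Finset.sum_congr rfl fun k _ => by ring
    rw [← hx2]
    rcases eq_or_ne (xb i) 0 with h | h
    · simp [h]
    · have hmem : xb i ∈ T := by
        rw [hT]
        exact Finset.mem_erase.2 ⟨h, Finset.mem_image.2 ⟨i, Finset.mem_univ _, rfl⟩⟩
      have := Lagrange.eval_interpolate_at_node (fun a => a⁻¹) hinj hmem
      simp only [id] at this
      rw [← hp] at this
      rw [this]
      field_simp
  rw [Submodule.mem_span_range_iff_exists_fun]
  refine ⟨fun k => p.coeff k, ?_⟩
  funext i
  rw [Finset.sum_apply, key i, ← Fin.sum_univ_eq_sum_range fun k => p.coeff k * xb i ^ (k+2)]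
  simp
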